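/- Let p be a prime with p ≡ 1 (mod 4) and p > 7, let K = ℚ(√−p), and let P be a prime ideal of the ring of integers of K lying over 2. Then the class of P has order exactly 2 in the ideal class group of K. (The ideal (2) is ramified in K, and since p > 7 there is no element of norm 2 in ℤ[√−p], so P is not principal while P² = (2) is.) -/

import Mathlib

open NumberField Polynomial
open scoped nonZeroDivisors

lemma aux_basis (p : ℕ) (hp : 0 < p) (K : Type*) [Field K] [NumberField K]
    (hdeg : Module.finrank ℚ K = 2) (α : K) (hα : α ^ 2 = -(p : K)) :
    ∃ B : Module.Basis (Fin 2) ℚ K, B 0 = 1 ∧ B 1 = α := by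
  have hα0 : α ≠ 0 := by
    intro h
    rw [h] at hα
    have hz : (0:K) = -(p:K) := by linear_combination hα
    have : p = 0 := by exact_mod_cast neg_eq_zero.mp hz.symm
    omega
  have li : LinearIndependent ℚ ![(1 : K), α] := by
    rw [linearIndependent_fin2]
    refine ⟨hα0, fun a ha => ?_⟩
    simp only [Matrix.cons_val_one, Matrix.head_cons, Matrix.cons_val_zero] at ha
    have ha' : algebraMap ℚ K a * α = 1 := by rw [← Algebra.smul_def]; exact ha
    have hinv : α = algebraMap ℚ K a⁻¹ := by
      rw [map_inv₀]; exact eq_inv_of_mul_eq_one_left (by linear_combination ha')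
    have h3 : a⁻¹ ^ 2 + (p:ℚ) = 0 := by
      have h2 : (algebraMap ℚ K) (a⁻¹ ^ 2 + (p:ℚ)) = 0 := by
        rw [map_add, map_pow, ← hinv, map_natCast]
        linear_combination hα
      simpa using (map_eq_zero_iff _ (algebraMap ℚ K).injective).mp h2
    nlinarith [sq_nonneg a⁻¹, (by exact_mod_cast hp : (0:ℚ) < p)]
  refine ⟨basisOfLinearIndependentOfCardEqFinrank li (by simp [hdeg]), ?_, ?_⟩ <;>
    simp [coe_basisOfLinearIndependentOfCardEqFinrank]

lemma aux_nt (p : ℕ) (K : Type*) [Field K] [NumberField K]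
    (α : K) (hα : α ^ 2 = -(p : K)) (B : Module.Basis (Fin 2) ℚ K) (hB0 : B 0 = 1) (hB1 : B 1 = α)
    (y : K) :
    Algebra.norm ℚ y = (B.repr y 0) ^ 2 + p * (B.repr y 1) ^ 2 ∧
      Algebra.trace ℚ K y = 2 * B.repr y 0 := by
  set c := B.repr y 0 with hc
  set d := B.repr y 1 with hd
  have hy : y = c • B 0 + d • B 1 := by
    conv_lhs => rw [← B.sum_repr y]
    rw [Fin.sum_univ_two]
  have hr0 : ∀ u v : ℚ, B.repr (u • B 0 + v • B 1) 0 = u := by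
    intro u v; simp [Finsupp.single_apply]
  have hr1 : ∀ u v : ℚ, B.repr (u • B 0 + v • B 1) 1 = v := by
    intro u v; simp [Finsupp.single_apply]
  have hmul : y * B 1 = (-(p * d)) • B 0 + c • B 1 := by
    rw [hB1, hy, hB0, hB1]
    simp only [Algebra.smul_def, map_neg, map_mul, map_natCast]
    linear_combination (algebraMap ℚ K d) * hα
  have e00 : Algebra.leftMulMatrix B y 0 0 = c := by
    rw [Algebra.leftMulMatrix_eq_repr_mul, hB0, mul_one, ← hc]
  have e10 : Algebra.leftMulMatrix B y 1 0 = d := by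
    rw [Algebra.leftMulMatrix_eq_repr_mul, hB0, mul_one, ← hd]
  have e01 : Algebra.leftMulMatrix B y 0 1 = -(p * d) := by
    rw [Algebra.leftMulMatrix_eq_repr_mul, hmul, hr0]
  have e11 : Algebra.leftMulMatrix B y 1 1 = c := by
    rw [Algebra.leftMulMatrix_eq_repr_mul, hmul, hr1]
  have hM : Algebra.leftMulMatrix B y = !![c, -(p * d); d, c] := by
    ext i j
    fin_cases i <;> fin_cases j <;> simp [e00, e01, e10, e11]
  constructor
  · rw [Algebra.norm_eq_matrix_det B, hM, Matrix.det_fin_two_of]; ring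
  · rw [Algebra.trace_eq_matrix_trace B, hM, Matrix.trace_fin_two_of]; ring

lemma no_norm_two (p : ℕ) (hp : p.Prime) (hgt : 7 < p) (K : Type*) [Field K] [NumberField K]
    (hdeg : Module.finrank ℚ K = 2) (α : K) (hα : α ^ 2 = -(p : K)) (x : 𝓞 K) :
    (Algebra.norm ℤ x).natAbs ≠ 2 := by
  obtain ⟨B, hB0, hB1⟩ := aux_basis p hp.pos K hdeg α hα
  intro habs
  obtain ⟨hnorm, htr⟩ := aux_nt p K α hα B hB0 hB1 (x : K)
  set c := B.repr (x : K) 0 with hc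
  set d := B.repr (x : K) 1 with hd
  have hval : (Algebra.norm ℤ x : ℚ) = c ^ 2 + p * d ^ 2 := by
    rw [Algebra.coe_norm_int, hnorm]
  have hge : (0 : ℚ) ≤ c ^ 2 + p * d ^ 2 := by positivity
  have hN : c ^ 2 + (p : ℚ) * d ^ 2 = 2 := by
    rcases Int.natAbs_eq_iff.mp habs with h | h <;> rw [h] at hval <;> push_cast at hval
    · exact hval.symm
    · exfalso; linarith
  set s : ℤ := Algebra.trace ℤ (𝓞 K) x with hsdef
  have hs : (s : ℚ) = 2 * c := by rw [hsdef, Algebra.coe_trace_int, htr]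
  have key : (p : ℚ) * (2 * d) ^ 2 = 8 - (s : ℚ) ^ 2 := by
    rw [hs]; linear_combination 4 * hN
  have hint : IsIntegral ℤ ((p : ℚ) * (2 * d)) := by
    refine ⟨Polynomial.X ^ 2 - Polynomial.C ((p : ℤ) * (8 - s ^ 2)),
      Polynomial.monic_X_pow_sub_C _ two_ne_zero, ?_⟩
    simp only [Polynomial.eval₂_sub, Polynomial.eval₂_X_pow, Polynomial.eval₂_C]
    push_cast
    norm_num
    linear_combination (p : ℚ) * key
  obtain ⟨w, hw⟩ := IsIntegrallyClosed.isIntegral_iff.mp hint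
  have hw' : (w : ℚ) = (p : ℚ) * (2 * d) := hw
  have hw2 : w ^ 2 = (p : ℤ) * (8 - s ^ 2) := by
    have : ((w ^ 2 : ℤ) : ℚ) = (((p : ℤ) * (8 - s ^ 2) : ℤ) : ℚ) := by
      push_cast
      rw [hw']
      linear_combination (p : ℚ) * key
    exact_mod_cast this
  have hpp : Prime (p : ℤ) := Nat.prime_iff_prime_int.mp hp
  have hpd : (p : ℤ) ∣ w := hpp.dvd_of_dvd_pow (n := 2) ⟨8 - s ^ 2, hw2⟩
  obtain ⟨w', rfl⟩ := hpd
  have hp0 : (0 : ℤ) < (p : ℤ) := by exact_mod_cast hp.pos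
  have hw'2 : (p : ℤ) * w' ^ 2 = 8 - s ^ 2 := by
    have h := hw2
    have : (p : ℤ) * ((p : ℤ) * w' ^ 2) = (p : ℤ) * (8 - s ^ 2) := by ring_nf; ring_nf at h; linarith
    exact mul_left_cancel₀ (ne_of_gt hp0) this
  have hs8 : s ^ 2 ≤ 8 := by nlinarith [sq_nonneg w']
  by_cases hw0 : w' = 0
  · rw [hw0] at hw'2
    have hs2 : s ^ 2 = 8 := by linarith [hw'2]
    have h1 : 6 * s ≤ 17 := by nlinarith [sq_nonneg (s - 3)]
    have h2 : -17 ≤ 6 * s := by nlinarith [sq_nonneg (s + 3)]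
    have h3 : s ≤ 2 := by omega
    have h4 : -2 ≤ s := by omega
    interval_cases s <;> norm_num at hs2
  · have h1 : 1 ≤ w' ^ 2 := by rcases Ne.lt_or_gt hw0 with h | h <;> nlinarith
    have h2 : (p : ℤ) ≤ 8 := by nlinarith
    have h3 : p ≤ 8 := by exact_mod_cast h2
    have h4 : p = 8 := by omega
    rw [h4] at hp
    norm_num at hp
open NumberField

set_option maxHeartbeats 1000000 in
set_option synthInstance.maxHeartbeats 400000 in

/-- Let `p ≡ 1 (mod 4)` be a prime with `p > 7` and let `K = ℚ(√−p)` (a number field of degree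
2 over `ℚ` containing a square root of `−p`).  Every prime ideal of the ring of integers of `K`
lying over 2 has order exactly 2 in the ideal class group of `K`. -/
theorem order_two_of_prime_over_two (p : ℕ) (hp : p.Prime) (hmod : p % 4 = 1) (hgt : 7 < p)
    (K : Type*) [Field K] [NumberField K]
    (hdeg : Module.finrank ℚ K = 2) (α : K) (hα : α ^ 2 = -(p : K))
    (P : Ideal (𝓞 K)) (hPprime : P.IsPrime) (hP0 : P ≠ ⊥) (h2 : (2 : 𝓞 K) ∈ P) :
    orderOf (ClassGroup.mk0 ⟨P, mem_nonZeroDivisors_of_ne_zero hP0⟩) = 2 := by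

  have hαint : IsIntegral ℤ α := ⟨Polynomial.X ^ 2 + Polynomial.C (p : ℤ),
    Polynomial.monic_X_pow_add_C _ two_ne_zero, by
      simp only [Polynomial.eval₂_add, Polynomial.eval₂_X_pow, Polynomial.eval₂_C]
      push_cast
      linear_combination hα⟩
  set a : 𝓞 K := ⟨α, hαint⟩ with hadef
  have hacoe : (a : K) = α := rfl
  set t : ℕ := p / 4 with htdef
  have ht : p = 4 * t + 1 := by omega
  have hpK : (p : K) = 4 * (t : K) + 1 := by exact_mod_cast congrArg (fun n : ℕ => (n : K)) ht
  have hid : (1 + a) ^ 2 = 2 * (a - 2 * (t : 𝓞 K)) := by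
    refine NumberField.RingOfIntegers.ext ?_
    push_cast [map_ofNat]
    simp only [hadef, NumberField.RingOfIntegers.coe_mk, NumberField.RingOfIntegers.map_mk]
    have hα' : (@Algebra.cast (𝓞 K) K _ _ (NumberField.RingOfIntegers.instAlgebra_1 K) ⟨α, hαint⟩) ^ 2 = -(p : K) := hα
    linear_combination hα' - hpK
  set Q : Ideal (𝓞 K) := Ideal.span {2, 1 + a} with hQdef
  have h2Q : (2 : 𝓞 K) ∈ Q := Ideal.subset_span (by simp)
  have h1aQ : (1 + a) ∈ Q := Ideal.subset_span (by simp)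
  have hQ2 : Q * Q = Ideal.span {(2 : 𝓞 K)} := by
    apply le_antisymm
    · rw [hQdef, Ideal.span_mul_span']
      rw [Ideal.span_le]
      rintro z ⟨x, hx, y, hy, rfl⟩
      simp only [Set.mem_insert_iff, Set.mem_singleton_iff] at hx hy
      rcases hx with rfl | rfl <;> rcases hy with rfl | rfl <;>
        rw [SetLike.mem_coe, Ideal.mem_span_singleton]
      · exact ⟨2, rfl⟩
      · exact ⟨1 + a, rfl⟩
      · exact ⟨1 + a, mul_comm _ _⟩
      · exact ⟨a - 2 * (t : 𝓞 K), by rw [← hid]; ring⟩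
    · rw [Ideal.span_le]
      intro z hz
      simp only [Set.mem_singleton_iff] at hz
      subst hz
      have m1 : (2 : 𝓞 K) * (1 + a) ∈ Q * Q := Ideal.mul_mem_mul h2Q h1aQ
      have m2 : (1 + a) * (1 + a) ∈ Q * Q := Ideal.mul_mem_mul h1aQ h1aQ
      have m3 : (2 : 𝓞 K) * 2 ∈ Q * Q := Ideal.mul_mem_mul h2Q h2Q
      have heq : (2 : 𝓞 K) = 2 * (1 + a) - (1 + a) * (1 + a) - (t : 𝓞 K) * (2 * 2) := by
        refine NumberField.RingOfIntegers.ext ?_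
        push_cast [map_ofNat]
        simp only [hadef, NumberField.RingOfIntegers.coe_mk, NumberField.RingOfIntegers.map_mk]
        have hα' : (@Algebra.cast (𝓞 K) K _ _ (NumberField.RingOfIntegers.instAlgebra_1 K) ⟨α, hαint⟩) ^ 2 = -(p : K) := hα
        linear_combination hα' - hpK
      rw [heq]
      exact sub_mem (sub_mem m1 m2) (Ideal.mul_mem_left _ _ m3)
  have h2ne : (2 : 𝓞 K) ≠ 0 := two_ne_zero
  have hnorm2 : Ideal.absNorm (Ideal.span {(2 : 𝓞 K)}) = 4 := by
    rw [Ideal.absNorm_span_singleton]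
    have hc : (Algebra.norm ℤ (2 : 𝓞 K) : ℚ) = 4 := by
      rw [Algebra.coe_norm_int]
      have h2K : ((2 : 𝓞 K) : K) = algebraMap ℚ K 2 := by
        push_cast [map_ofNat]; norm_num
      rw [h2K, Algebra.norm_algebraMap, hdeg]; norm_num
    have h4 : Algebra.norm ℤ (2 : 𝓞 K) = 4 := by exact_mod_cast hc
    rw [h4]; rfl
  have hQnorm : Ideal.absNorm Q = 2 := by
    have hm : Ideal.absNorm Q * Ideal.absNorm Q = 4 := by
      rw [← _root_.map_mul Ideal.absNorm, hQ2, hnorm2]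
    nlinarith [hm]
  have hQP : Q ≤ P := by
    rw [hQdef, Ideal.span_le]
    intro z hz
    simp only [Set.mem_insert_iff, Set.mem_singleton_iff] at hz
    rcases hz with rfl | rfl
    · exact h2
    · exact hPprime.mem_of_pow_mem 2 (by rw [hid]; exact Ideal.mul_mem_right _ _ h2)
  obtain ⟨R, hR⟩ := Ideal.dvd_iff_le.mpr hQP
  have habsP : Ideal.absNorm P ∣ 2 := by
    rw [← hQnorm, hR, _root_.map_mul]; exact dvd_mul_right _ _
  have hPn1 : Ideal.absNorm P ≠ 1 := fun h =>
    hPprime.ne_top (Ideal.absNorm_eq_one_iff.mp h)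
  have hPnorm : Ideal.absNorm P = 2 := by
    rcases (Nat.prime_two.eq_one_or_self_of_dvd _ habsP) with h | h
    · exact absurd h hPn1
    · exact h
  have hRtop : R = ⊤ := by
    have h5 := congrArg Ideal.absNorm hR
    rw [_root_.map_mul, hQnorm, hPnorm] at h5
    have : Ideal.absNorm R = 1 := by omega
    exact Ideal.absNorm_eq_one_iff.mp this
  have hPQ : P = Q := by rw [hR, hRtop, Ideal.mul_top]
  have hspan2ne : Ideal.span {(2 : 𝓞 K)} ≠ (⊥ : Ideal (𝓞 K)) := by
    rw [ne_eq, Ideal.span_singleton_eq_bot]; exact h2ne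
  haveI : Fact (Nat.Prime 2) := ⟨Nat.prime_two⟩
  apply orderOf_eq_prime
  · rw [← map_pow]
    have hval : ((⟨P, mem_nonZeroDivisors_of_ne_zero hP0⟩ : (Ideal (𝓞 K))⁰) ^ 2)
        = ⟨Ideal.span {(2 : 𝓞 K)}, mem_nonZeroDivisors_of_ne_zero hspan2ne⟩ := by
      apply Subtype.ext
      show (P ^ 2 : Ideal (𝓞 K)) = Ideal.span {(2 : 𝓞 K)}
      rw [sq, hPQ, hQ2]
    rw [hval, ClassGroup.mk0_eq_one_iff]
    exact ⟨⟨2, rfl⟩⟩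
  · intro h1
    rw [ClassGroup.mk0_eq_one_iff] at h1
    obtain ⟨x, hx⟩ := h1
    have hxn : Ideal.absNorm P = (Algebra.norm ℤ x).natAbs := by
      rw [hx, Ideal.submodule_span_eq, Ideal.absNorm_span_singleton]
    exact no_norm_two p hp hgt K hdeg α hα x (by rw [← hxn, hPnorm])
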